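/- For any nondecreasing sequence of critical values τ = (τ_1, …, τ_m) ∈ [0,1]^m such that F_i(τ_m) < 1 for all i, the false discovery rate of the step-up procedure SU(τ) satisfies FDR(SU(τ)) ≤ max_{1 ≤ k ≤ m} (1/k) · Σ_{i=1}^m F_i(τ_k)/(1 − F_i(τ_m)). -/

import Mathlib

open MeasureTheory ProbabilityTheory Finset

/-- Number of rejections of the step-up procedure with critical values `τ 1, …, τ m`
(convention `τ 0 = 0`): the largest `k ∈ {0, …, m}` such that at least `k` of the
p-values are `≤ τ k`. -/
noncomputable def numRejSU (m : ℕ) (τ : ℕ → ℝ) (q : Fin m → ℝ) : ℕ :=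
  sSup {k | k ≤ m ∧ k ≤ (univ.filter (fun j => q j ≤ τ k)).card}

/-- Rejection set of the step-up procedure. -/
noncomputable def rejSU (m : ℕ) (τ : ℕ → ℝ) (q : Fin m → ℝ) : Finset (Fin m) :=
  univ.filter (fun i => q i ≤ τ (numRejSU m τ q))

/-- False discovery proportion of a rejection set `R` w.r.t. the set of true nulls `H0`. -/
noncomputable def FDP (m : ℕ) (H0 R : Finset (Fin m)) : ℝ :=
  ((R ∩ H0).card : ℝ) / max (R.card : ℝ) 1

namespace FDRAux

/-- The count of p-values below `τ k`. -/
noncomputable def nu (m : ℕ) (τ : ℕ → ℝ) (k : ℕ) (v : Fin m → ℝ) : ℕ :=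
  (univ.filter (fun j => v j ≤ τ k)).card

/-- step-up index with a phantom extra rejection. -/
noncomputable def Kaug (m : ℕ) (τ : ℕ → ℝ) (v : Fin m → ℝ) : ℕ :=
  sSup {k | k ≤ m ∧ k ≤ nu m τ k v + 1}

variable {m : ℕ} {τ : ℕ → ℝ} {v : Fin m → ℝ}

lemma numRejSU_eq_sSup (v : Fin m → ℝ) :
    numRejSU m τ v = sSup {k | k ≤ m ∧ k ≤ nu m τ k v} := rfl

lemma S_zero_mem : 0 ∈ {k | k ≤ m ∧ k ≤ nu m τ k v} := ⟨Nat.zero_le _, Nat.zero_le _⟩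

lemma S_bddAbove : BddAbove {k | k ≤ m ∧ k ≤ nu m τ k v} := ⟨m, fun _ hk => hk.1⟩

lemma numRej_mem : numRejSU m τ v ∈ {k | k ≤ m ∧ k ≤ nu m τ k v} :=
  Nat.sSup_mem ⟨0, S_zero_mem⟩ S_bddAbove

lemma numRej_le : numRejSU m τ v ≤ m := numRej_mem.1

lemma le_numRej_of_mem {k : ℕ} (h : k ∈ {k | k ≤ m ∧ k ≤ nu m τ k v}) :
    k ≤ numRejSU m τ v := le_csSup S_bddAbove h

lemma nu_le : nu m τ k v ≤ m := by
  simpa [nu] using (Finset.card_filter_le univ (fun j => v j ≤ τ k))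

lemma nu_mono {k l : ℕ} (h : τ k ≤ τ l) : nu m τ k v ≤ nu m τ l v := by
  apply Finset.card_le_card
  intro j hj
  simp only [Finset.mem_filter] at *
  exact ⟨hj.1, hj.2.trans h⟩

lemma nu_numRej (hτmono : ∀ k l, k ≤ l → l ≤ m → τ k ≤ τ l) :
    nu m τ (numRejSU m τ v) v = numRejSU m τ v := by
  set κ := numRejSU m τ v with hκ
  have h1 : κ ≤ nu m τ κ v := numRej_mem.2
  have hκm : κ ≤ m := numRej_le
  refine le_antisymm ?_ h1
  by_contra hlt
  push_neg at hlt
  rcases eq_or_lt_of_le hκm with h | h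
  · have h2 : nu m τ κ v ≤ m := nu_le
    omega
  · have : κ + 1 ≤ numRejSU m τ v := by
      apply le_numRej_of_mem
      exact ⟨h, le_trans hlt (nu_mono (hτmono κ (κ+1) (Nat.le_succ _) h))⟩
    omega

lemma card_rejSU (hτmono : ∀ k l, k ≤ l → l ≤ m → τ k ≤ τ l) :
    (rejSU m τ v).card = numRejSU m τ v := nu_numRej hτmono

lemma mem_rejSU_iff {i : Fin m} : i ∈ rejSU m τ v ↔ v i ≤ τ (numRejSU m τ v) := by
  simp [rejSU]

lemma FDP_rejSU_eq (hτmono : ∀ k l, k ≤ l → l ≤ m → τ k ≤ τ l) (H0 : Finset (Fin m)) :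
    FDP m H0 (rejSU m τ v)
      = ∑ i ∈ H0, (if v i ≤ τ (numRejSU m τ v) then ((numRejSU m τ v : ℝ))⁻¹ else 0) := by
  set κ := numRejSU m τ v with hκ
  have hcard : (rejSU m τ v).card = κ := card_rejSU hτmono
  have hinter : rejSU m τ v ∩ H0 = H0.filter (fun i => v i ≤ τ κ) := by
    ext i; simp [rejSU, Finset.mem_filter, Finset.mem_inter, and_comm, hκ]
  rcases Nat.eq_zero_or_pos κ with h0 | hpos
  · have hrej : rejSU m τ v = ∅ := Finset.card_eq_zero.1 (by rw [hcard, h0])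
    have : ∀ i ∈ H0, ¬ (v i ≤ τ κ) := by
      intro i _ hle
      have : i ∈ rejSU m τ v := mem_rejSU_iff.2 hle
      simp [hrej] at this
    rw [Finset.sum_congr rfl (fun i hi => if_neg (this i hi))]
    simp [FDP, hrej]
  · have hκR : max ((rejSU m τ v).card : ℝ) 1 = (κ : ℝ) := by
      rw [hcard]
      exact max_eq_left (by exact_mod_cast hpos)
    rw [FDP, hκR, hinter, Finset.card_filter]
    push_cast
    rw [Finset.sum_div]
    refine Finset.sum_congr rfl (fun i _ => ?_)
    split_ifs <;> simp


section Update

variable {i : Fin m}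

lemma nu_update_ge (hvi : 0 ≤ v i) (k : ℕ) :
    nu m τ k v ≤ nu m τ k (Function.update v i 0) := by
  apply Finset.card_le_card
  intro j hj
  simp only [Finset.mem_filter, Finset.mem_univ, true_and] at *
  rcases eq_or_ne j i with rfl | hne
  · rw [Function.update_self]
    exact le_trans hvi hj
  · rwa [Function.update_of_ne hne]

lemma numRej_update_ge (hvi : 0 ≤ v i) :
    numRejSU m τ v ≤ numRejSU m τ (Function.update v i 0) := by
  rw [numRejSU_eq_sSup, numRejSU_eq_sSup]
  apply csSup_le_csSup S_bddAbove ⟨0, S_zero_mem⟩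
  intro k hk
  exact ⟨hk.1, le_trans hk.2 (nu_update_ge hvi k)⟩

lemma nu_update_le_of_le {k : ℕ} (h : v i ≤ τ k) :
    nu m τ k (Function.update v i 0) ≤ nu m τ k v := by
  apply Finset.card_le_card
  intro j hj
  simp only [Finset.mem_filter, Finset.mem_univ, true_and] at *
  rcases eq_or_ne j i with rfl | hne
  · exact h
  · rwa [Function.update_of_ne hne] at hj

lemma numRej_update_of_le (hτmono : ∀ k l, k ≤ l → l ≤ m → τ k ≤ τ l)
    (hvi : 0 ≤ v i) (h : v i ≤ τ (numRejSU m τ v)) :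
    numRejSU m τ (Function.update v i 0) = numRejSU m τ v := by
  refine le_antisymm ?_ (numRej_update_ge hvi)
  rw [numRejSU_eq_sSup (Function.update v i 0)]
  apply csSup_le ⟨0, S_zero_mem⟩
  intro k hk
  by_contra hgt
  push_neg at hgt
  have hτk : v i ≤ τ k := le_trans h (hτmono _ _ (le_of_lt hgt) hk.1)
  have : k ∈ {k | k ≤ m ∧ k ≤ nu m τ k v} :=
    ⟨hk.1, le_trans hk.2 (nu_update_le_of_le hτk)⟩
  exact absurd (le_numRej_of_mem this) (not_le.2 hgt)

lemma numRej_update_of_le' (hvi : 0 ≤ v i)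
    (h : v i ≤ τ (numRejSU m τ (Function.update v i 0))) :
    numRejSU m τ (Function.update v i 0) = numRejSU m τ v := by
  refine le_antisymm ?_ (numRej_update_ge hvi)
  apply le_numRej_of_mem
  have hmem := numRej_mem (v := Function.update v i 0) (τ := τ)
  exact ⟨hmem.1, le_trans hmem.2 (nu_update_le_of_le h)⟩

lemma one_le_numRej_update (hm : 1 ≤ m) (hτ1 : 0 ≤ τ 1) :
    1 ≤ numRejSU m τ (Function.update v i 0) := by
  apply le_numRej_of_mem
  refine ⟨hm, ?_⟩
  have : i ∈ univ.filter (fun j => Function.update v i 0 j ≤ τ 1) := by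
    simp [Function.update_self, hτ1]
  exact Finset.card_pos.2 ⟨i, this⟩

lemma nu_update_of_gt {k : ℕ} (hτk : 0 ≤ τ k) (hτkm : τ k ≤ τ m) (h : τ m < v i) :
    nu m τ k (Function.update v i 0) = nu m τ k v + 1 := by
  have hni : i ∉ univ.filter (fun j => v j ≤ τ k) := by
    simp only [Finset.mem_filter, Finset.mem_univ, true_and, not_le]
    exact lt_of_le_of_lt hτkm h
  have hset : univ.filter (fun j => Function.update v i 0 j ≤ τ k)
      = insert i (univ.filter (fun j => v j ≤ τ k)) := by
    ext j
    simp only [Finset.mem_filter, Finset.mem_univ, true_and, Finset.mem_insert]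
    rcases eq_or_ne j i with rfl | hne
    · simp [Function.update_self, hτk]
    · simp [Function.update_of_ne hne, hne]
  rw [nu, hset, Finset.card_insert_of_notMem hni, nu]

lemma numRej_update_of_gt (hτ0 : ∀ k ≤ m, 0 ≤ τ k) (hτm : ∀ k ≤ m, τ k ≤ τ m)
    (h : τ m < v i) :
    numRejSU m τ (Function.update v i 0) = Kaug m τ v := by
  rw [numRejSU_eq_sSup, Kaug]
  congr 1
  ext k
  simp only [Set.mem_setOf_eq, and_congr_right_iff]
  intro hk
  rw [nu_update_of_gt (hτ0 k hk) (hτm k hk) h]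

lemma Kaug_le : Kaug m τ v ≤ m := by
  have h : Kaug m τ v ∈ {k | k ≤ m ∧ k ≤ nu m τ k v + 1} :=
    Nat.sSup_mem (s := {k | k ≤ m ∧ k ≤ nu m τ k v + 1})
      ⟨0, ⟨Nat.zero_le _, Nat.zero_le _⟩⟩ ⟨m, fun _ hk => hk.1⟩
  exact h.1

lemma one_le_Kaug (hm : 1 ≤ m) : 1 ≤ Kaug m τ v :=
  le_csSup (s := {k | k ≤ m ∧ k ≤ nu m τ k v + 1}) ⟨m, fun _ hk => hk.1⟩
    ⟨hm, Nat.succ_le_succ (Nat.zero_le _)⟩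

end Update


section Meas

lemma measurable_nu (k : ℕ) : Measurable (fun v : Fin m → ℝ => nu m τ k v) := by
  have : (fun v : Fin m → ℝ => nu m τ k v)
      = fun v => ∑ j : Fin m, (if v j ≤ τ k then 1 else 0) := by
    funext v
    rw [nu, Finset.card_filter]
  rw [this]
  apply Finset.measurable_sum
  intro j _
  exact Measurable.ite (measurableSet_le (measurable_pi_apply j) measurable_const)
    measurable_const measurable_const

lemma numRej_eq_iff (v : Fin m → ℝ) (n : ℕ) :
    numRejSU m τ v = n ↔
      ((n ≤ m ∧ n ≤ nu m τ n v) ∨ n = 0)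
        ∧ ∀ l, l ≤ m → n < l → nu m τ l v < l := by
  constructor
  · rintro rfl
    refine ⟨Or.inl numRej_mem, fun l hlm hl => ?_⟩
    by_contra hc
    push_neg at hc
    exact absurd (le_numRej_of_mem ⟨hlm, hc⟩) (not_le.2 hl)
  · rintro ⟨h1, h2⟩
    refine le_antisymm ?_ ?_
    · apply csSup_le ⟨0, S_zero_mem⟩
      intro k hk
      by_contra hc
      push_neg at hc
      exact absurd hk.2 (not_le.2 (h2 k hk.1 hc))
    · rcases h1 with h | rfl
      · exact le_numRej_of_mem h
      · exact Nat.zero_le _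

lemma measurable_numRej : Measurable (numRejSU m τ) := by
  apply measurable_to_countable'
  intro n
  have : numRejSU m τ ⁻¹' {n}
      = ({v : Fin m → ℝ | (n ≤ m ∧ n ≤ nu m τ n v) ∨ n = 0}
        ∩ ⋂ l : ℕ, {v : Fin m → ℝ | l ≤ m → n < l → nu m τ l v < l}) := by
    ext v
    simp only [Set.mem_preimage, Set.mem_singleton_iff, Set.mem_inter_iff, Set.mem_iInter,
      Set.mem_setOf_eq]
    rw [numRej_eq_iff]
  rw [this]
  apply MeasurableSet.inter
  · rcases eq_or_ne n 0 with rfl | hn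
    · simp
    · have : {v : Fin m → ℝ | (n ≤ m ∧ n ≤ nu m τ n v) ∨ n = 0}
          = {v : Fin m → ℝ | n ≤ m ∧ n ≤ nu m τ n v} := by
        ext v; simp [hn]
      rw [this]
      by_cases hnm : n ≤ m
      · have : {v : Fin m → ℝ | n ≤ m ∧ n ≤ nu m τ n v}
            = (fun v => nu m τ n v) ⁻¹' {c | n ≤ c} := by
          ext v; simp [hnm]
        rw [this]
        exact (measurable_nu n) MeasurableSet.of_discrete
      · have : {v : Fin m → ℝ | n ≤ m ∧ n ≤ nu m τ n v} = ∅ := by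
          ext v; simp [hnm]
        rw [this]; exact MeasurableSet.empty
  · apply MeasurableSet.iInter
    intro l
    by_cases hc : l ≤ m ∧ n < l
    · have : {v : Fin m → ℝ | l ≤ m → n < l → nu m τ l v < l}
          = (fun v => nu m τ l v) ⁻¹' {c | c < l} := by
        ext v; simp [hc.1, hc.2]
      rw [this]
      exact (measurable_nu l) MeasurableSet.of_discrete
    · have : {v : Fin m → ℝ | l ≤ m → n < l → nu m τ l v < l} = Set.univ := by
        ext v
        simp only [Set.mem_setOf_eq, Set.mem_univ, iff_true]
        intro h1 h2
        exact absurd ⟨h1, h2⟩ hc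
      rw [this]; exact MeasurableSet.univ

end Meas


section Repr

variable {i : Fin m}

lemma if_numRej_repr (hτmono : ∀ k l, k ≤ l → l ≤ m → τ k ≤ τ l) (hm : 1 ≤ m)
    (hτ1 : 0 ≤ τ 1) (hv : ∀ j, 0 ≤ v j) (i : Fin m) :
    (if v i ≤ τ (numRejSU m τ v) then ((numRejSU m τ v : ℝ))⁻¹ else 0)
      = ∑ k ∈ Finset.Icc 1 m,
          (if numRejSU m τ (Function.update v i 0) = k ∧ v i ≤ τ k then ((k : ℝ))⁻¹ else 0) := by
  by_cases hcond : v i ≤ τ (numRejSU m τ v)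
  · have hupd : numRejSU m τ (Function.update v i 0) = numRejSU m τ v :=
      numRej_update_of_le hτmono (hv i) hcond
    have hpos : 1 ≤ numRejSU m τ v := hupd ▸ one_le_numRej_update hm hτ1
    rw [if_pos hcond]
    rw [Finset.sum_eq_single_of_mem (numRejSU m τ v)
      (Finset.mem_Icc.2 ⟨hpos, numRej_le⟩)]
    · rw [if_pos ⟨hupd, hcond⟩]
    · intro k _ hk
      rw [if_neg]
      rintro ⟨h1, _⟩
      exact hk (h1.symm.trans hupd)
  · rw [if_neg hcond]
    symm
    apply Finset.sum_eq_zero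
    intro k _
    rw [if_neg]
    rintro ⟨h1, h2⟩
    have : v i ≤ τ (numRejSU m τ (Function.update v i 0)) := h1 ▸ h2
    have heq := numRej_update_of_le' (hv i) this
    exact hcond (by rw [← heq, h1]; exact h2)

lemma if_gt_repr (hm : 1 ≤ m) (hτ0 : ∀ k ≤ m, 0 ≤ τ k) (hτm : ∀ k ≤ m, τ k ≤ τ m)
    (i : Fin m) (c : ℕ → ℝ) :
    (∑ k ∈ Finset.Icc 1 m,
        (if numRejSU m τ (Function.update v i 0) = k ∧ τ m < v i then c k else 0))
      = if τ m < v i then c (Kaug m τ v) else 0 := by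
  by_cases hcond : τ m < v i
  · have hupd : numRejSU m τ (Function.update v i 0) = Kaug m τ v :=
      numRej_update_of_gt hτ0 hτm hcond
    rw [if_pos hcond]
    rw [Finset.sum_eq_single_of_mem (Kaug m τ v)
      (Finset.mem_Icc.2 ⟨one_le_Kaug hm, Kaug_le⟩)]
    · rw [if_pos ⟨hupd, hcond⟩]
    · intro k _ hk
      rw [if_neg]
      rintro ⟨h1, _⟩
      exact hk (h1.symm.trans hupd)
  · rw [if_neg hcond]
    apply Finset.sum_eq_zero
    intro k _
    rw [if_neg]
    rintro ⟨_, h2⟩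
    exact hcond h2

end Repr


section Main

variable {Ω : Type*} [MeasurableSpace Ω]

/-- leave-one-out rejection-number event. -/
def Dset (m : ℕ) (τ : ℕ → ℝ) (p : Fin m → Ω → ℝ) (i : Fin m) (k : ℕ) : Set Ω :=
  {ω | numRejSU m τ (Function.update (fun j => p j ω) i 0) = k}

noncomputable def phiF (m : ℕ) (τ : ℕ → ℝ) (p : Fin m → Ω → ℝ) (i : Fin m) (ω : Ω) : ℝ :=
  ∑ k ∈ Finset.Icc 1 m,
    ((Dset m τ p i k) ∩ {ω | p i ω ≤ τ k}).indicator (fun _ => ((k : ℝ))⁻¹) ω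

noncomputable def psiF (m : ℕ) (τ : ℕ → ℝ) (p : Fin m → Ω → ℝ) (F : Fin m → ℝ → ℝ)
    (i : Fin m) (ω : Ω) : ℝ :=
  ∑ k ∈ Finset.Icc 1 m,
    ((Dset m τ p i k) ∩ {ω | τ m < p i ω}).indicator
      (fun _ => (1 - F i (τ m))⁻¹ * F i (τ k) * ((k : ℝ))⁻¹) ω

end Main

end FDRAux

/-- non-adaptive heterogeneous FDR bound for the step-up procedure. -/
theorem fdr_su_le_nonadaptive_bound
    {Ω : Type*} [MeasurableSpace Ω] (P : Measure Ω) [IsProbabilityMeasure P]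
    (m : ℕ) (hm : 1 ≤ m)
    (p : Fin m → Ω → ℝ) (hmeas : ∀ i, Measurable (p i))
    (hp01 : ∀ i ω, p i ω ∈ Set.Icc (0 : ℝ) 1)
    (hindep : iIndepFun p P)
    (H0 : Finset (Fin m))
    (F : Fin m → ℝ → ℝ)
    (hFmono : ∀ i, MonotoneOn (F i) (Set.Icc 0 1))
    (hFrange : ∀ i, ∀ t ∈ Set.Icc (0 : ℝ) 1, F i t ∈ Set.Icc (0 : ℝ) 1)
    (hF0 : ∀ i, F i 0 = 0) (hF1 : ∀ i, F i 1 = 1)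
    (hnull : ∀ i ∈ H0, ∀ t ∈ Set.Icc (0 : ℝ) 1,
      P {ω | p i ω ≤ t} ≤ ENNReal.ofReal (F i t))
    (τ : ℕ → ℝ) (hτ0 : τ 0 = 0)
    (hτmono : ∀ k l, k ≤ l → l ≤ m → τ k ≤ τ l)
    (hτ01 : ∀ k ≤ m, τ k ∈ Set.Icc (0 : ℝ) 1)
    (hFτm : ∀ i, F i (τ m) < 1) :
    ∫ ω, FDP m H0 (rejSU m τ (fun j => p j ω)) ∂P
      ≤ (Finset.Icc 1 m).sup' (Finset.nonempty_Icc.mpr hm)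
          (fun k => (1 / (k : ℝ)) * ∑ i : Fin m, F i (τ k) / (1 - F i (τ m))) := by
  classical
  have hτ1 : 0 ≤ τ 1 := (hτ01 1 hm).1
  have hτ0k : ∀ k ≤ m, 0 ≤ τ k := fun k hk => (hτ01 k hk).1
  have hτm : ∀ k ≤ m, τ k ≤ τ m := fun k hk => hτmono k m hk le_rfl
  have hFm0 : ∀ i : Fin m, 0 < 1 - F i (τ m) := fun i => by linarith [hFτm i]
  have hFnn : ∀ (i : Fin m) (k : ℕ), k ≤ m → 0 ≤ F i (τ k) :=
    fun i k hk => (hFrange i (τ k) (hτ01 k hk)).1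
  set M := (Finset.Icc 1 m).sup' (Finset.nonempty_Icc.mpr hm)
      (fun k => (1 / (k : ℝ)) * ∑ i : Fin m, F i (τ k) / (1 - F i (τ m))) with hMdef
  -- measurability of the leave-one-out update maps
  have hupdmeas : ∀ i : Fin m,
      Measurable (fun ω => Function.update (fun j => p j ω) i 0) := by
    intro i
    apply measurable_pi_lambda
    intro j
    by_cases hj : j = i
    · subst hj
      simp only [Function.update_self]
      exact measurable_const
    · simp only [Function.update_of_ne hj]
      exact hmeas j
  have hDmeas : ∀ (i : Fin m) (k : ℕ), MeasurableSet (FDRAux.Dset m τ p i k) := by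
    intro i k
    exact (FDRAux.measurable_numRej.comp (hupdmeas i)) (measurableSet_singleton k)
  have hEmeas : ∀ (i : Fin m) (k : ℕ), MeasurableSet {ω | p i ω ≤ τ k} :=
    fun i k => (hmeas i) measurableSet_Iic
  have hGmeas : ∀ i : Fin m, MeasurableSet {ω | τ m < p i ω} :=
    fun i => (hmeas i) measurableSet_Ioi
  -- independence: product formula
  have hprod : ∀ (i : Fin m) (S : Set (Fin m → ℝ)) (T : Set ℝ),
      MeasurableSet S → MeasurableSet T →
      P ({ω | Function.update (fun j => p j ω) i 0 ∈ S} ∩ {ω | p i ω ∈ T})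
        = P {ω | Function.update (fun j => p j ω) i 0 ∈ S} * P {ω | p i ω ∈ T} := by
    intro i S T hS hT
    have hextmeas : Measurable (fun (u : (({i}ᶜ : Finset (Fin m)) → ℝ)) (j : Fin m) =>
        if hj : j ∈ ({i}ᶜ : Finset (Fin m)) then u ⟨j, hj⟩ else 0) := by
      apply measurable_pi_lambda
      intro j
      by_cases hj : j ∈ ({i}ᶜ : Finset (Fin m))
      · simp only [dif_pos hj]
        exact measurable_pi_apply _
      · simp only [dif_neg hj]
        exact measurable_const
    have hcomp : ∀ ω : Ω,
        (fun (j : Fin m) => if hj : j ∈ ({i}ᶜ : Finset (Fin m)) then p j ω else 0)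
          = Function.update (fun j => p j ω) i 0 := by
      intro ω
      funext j
      by_cases hj : j = i
      · subst hj
        have h1 : j ∉ ({j}ᶜ : Finset (Fin m)) := by simp
        simp [dif_neg h1]
      · have h1 : j ∈ ({i}ᶜ : Finset (Fin m)) := by simpa using hj
        simp [dif_pos h1, Function.update_apply, hj]
    have hIF0 := hindep.indepFun_finset {i} ({i}ᶜ) disjoint_compl_right hmeas
    have hIF : IndepFun (p i) (fun ω (j : ({i}ᶜ : Finset (Fin m))) => p j ω) P := by
      have h2 := hIF0.comp
        (φ := fun u : (({i} : Finset (Fin m)) → ℝ) => u ⟨i, Finset.mem_singleton_self i⟩)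
        (ψ := id) (_mγ := Real.measurableSpace) (_mγ' := MeasurableSpace.pi)
        (measurable_pi_apply _) measurable_id
      exact h2
    have hmain := hIF.measure_inter_preimage_eq_mul T
      ((fun (u : (({i}ᶜ : Finset (Fin m)) → ℝ)) (j : Fin m) =>
        if hj : j ∈ ({i}ᶜ : Finset (Fin m)) then u ⟨j, hj⟩ else 0) ⁻¹' S) hT (hextmeas hS)
    have hSset : {ω | Function.update (fun j => p j ω) i 0 ∈ S}
        = (fun ω (j : ({i}ᶜ : Finset (Fin m))) => p j ω) ⁻¹'
          ((fun (u : (({i}ᶜ : Finset (Fin m)) → ℝ)) (j : Fin m) =>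
            if hj : j ∈ ({i}ᶜ : Finset (Fin m)) then u ⟨j, hj⟩ else 0) ⁻¹' S) := by
      ext ω
      simp only [Set.mem_setOf_eq, Set.mem_preimage]
      rw [hcomp ω]
    rw [hSset]
    have hTset : {ω | p i ω ∈ T} = p i ⁻¹' T := rfl
    rw [hTset, Set.inter_comm, hmain, mul_comm]
  -- probability comparison facts
  have hPE : ∀ i ∈ H0, ∀ k ≤ m, (P {ω | p i ω ≤ τ k}).toReal ≤ F i (τ k) := by
    intro i hi k hk
    exact ENNReal.toReal_le_of_le_ofReal (hFnn i k hk) (hnull i hi (τ k) (hτ01 k hk))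
  have hPG : ∀ i ∈ H0, 1 - F i (τ m) ≤ (P {ω | τ m < p i ω}).toReal := by
    intro i hi
    have hc : {ω | τ m < p i ω} = {ω | p i ω ≤ τ m}ᶜ := by
      ext ω; simp [not_le]
    rw [hc, prob_compl_eq_one_sub (hEmeas i m)]
    rw [ENNReal.toReal_sub_of_le prob_le_one ENNReal.one_ne_top]
    simp only [ENNReal.toReal_one]
    linarith [hPE i hi m le_rfl]
  -- pointwise representation of FDP
  have stepA : ∀ ω, FDP m H0 (rejSU m τ (fun j => p j ω)) = ∑ i ∈ H0, FDRAux.phiF m τ p i ω := by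
    intro ω
    rw [FDRAux.FDP_rejSU_eq hτmono]
    refine Finset.sum_congr rfl (fun i _ => ?_)
    rw [FDRAux.if_numRej_repr hτmono hm hτ1 (fun j => (hp01 j ω).1) i]
    refine Finset.sum_congr rfl (fun k _ => ?_)
    by_cases hA : numRejSU m τ (Function.update (fun j => p j ω) i 0) = k ∧ p i ω ≤ τ k
    · have hmem : ω ∈ FDRAux.Dset m τ p i k ∩ {ω | p i ω ≤ τ k} := ⟨hA.1, hA.2⟩
      rw [if_pos hA, Set.indicator_of_mem hmem]
    · have hnot : ω ∉ FDRAux.Dset m τ p i k ∩ {ω | p i ω ≤ τ k} := fun hmem => hA ⟨hmem.1, hmem.2⟩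
      rw [if_neg hA, Set.indicator_of_notMem hnot]
  -- integrability
  have hφint : ∀ i : Fin m, Integrable (FDRAux.phiF m τ p i) P := by
    intro i
    apply integrable_finset_sum
    intro k _
    exact (integrable_const _).indicator ((hDmeas i k).inter (hEmeas i k))
  have hψint : ∀ i : Fin m, Integrable (FDRAux.psiF m τ p F i) P := by
    intro i
    apply integrable_finset_sum
    intro k _
    exact (integrable_const _).indicator ((hDmeas i k).inter (hGmeas i))
  -- integral values
  have hφval : ∀ i : Fin m, ∫ ω, FDRAux.phiF m τ p i ω ∂P
      = ∑ k ∈ Finset.Icc 1 m,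
          (P ((FDRAux.Dset m τ p i k) ∩ {ω | p i ω ≤ τ k})).toReal * ((k : ℝ))⁻¹ := by
    intro i
    unfold FDRAux.phiF
    rw [integral_finset_sum _
      (fun k _ => (integrable_const _).indicator ((hDmeas i k).inter (hEmeas i k)))]
    refine Finset.sum_congr rfl (fun k _ => ?_)
    rw [integral_indicator_const _ ((hDmeas i k).inter (hEmeas i k)), smul_eq_mul, measureReal_def]
  have hψval : ∀ i : Fin m, ∫ ω, FDRAux.psiF m τ p F i ω ∂P
      = ∑ k ∈ Finset.Icc 1 m,
          (P ((FDRAux.Dset m τ p i k) ∩ {ω | τ m < p i ω})).toReal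
            * ((1 - F i (τ m))⁻¹ * F i (τ k) * ((k : ℝ))⁻¹) := by
    intro i
    unfold FDRAux.psiF
    rw [integral_finset_sum _
      (fun k _ => (integrable_const _).indicator ((hDmeas i k).inter (hGmeas i)))]
    refine Finset.sum_congr rfl (fun k _ => ?_)
    rw [integral_indicator_const _ ((hDmeas i k).inter (hGmeas i)), smul_eq_mul, measureReal_def]
  -- the per-(i,k) comparison
  have hbound : ∀ i ∈ H0, ∀ k ∈ Finset.Icc 1 m,
      (P ((FDRAux.Dset m τ p i k) ∩ {ω | p i ω ≤ τ k})).toReal * ((k : ℝ))⁻¹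
        ≤ (P ((FDRAux.Dset m τ p i k) ∩ {ω | τ m < p i ω})).toReal
            * ((1 - F i (τ m))⁻¹ * F i (τ k) * ((k : ℝ))⁻¹) := by
    intro i hi k hk
    have hkm : k ≤ m := (Finset.mem_Icc.1 hk).2
    have hprodE := hprod i (numRejSU m τ ⁻¹' {k}) (Set.Iic (τ k))
      (FDRAux.measurable_numRej (measurableSet_singleton k)) measurableSet_Iic
    have hprodG := hprod i (numRejSU m τ ⁻¹' {k}) (Set.Ioi (τ m))
      (FDRAux.measurable_numRej (measurableSet_singleton k)) measurableSet_Ioi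
    have hDE : P ((FDRAux.Dset m τ p i k) ∩ {ω | p i ω ≤ τ k})
        = P (FDRAux.Dset m τ p i k) * P {ω | p i ω ≤ τ k} := hprodE
    have hDG : P ((FDRAux.Dset m τ p i k) ∩ {ω | τ m < p i ω})
        = P (FDRAux.Dset m τ p i k) * P {ω | τ m < p i ω} := hprodG
    set a := (P (FDRAux.Dset m τ p i k)).toReal with ha
    set b := (P {ω | p i ω ≤ τ k}).toReal with hb
    set g := (P {ω | τ m < p i ω}).toReal with hg
    have hDE' : (P ((FDRAux.Dset m τ p i k) ∩ {ω | p i ω ≤ τ k})).toReal = a * b := by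
      rw [hDE, ENNReal.toReal_mul]
    have hDG' : (P ((FDRAux.Dset m τ p i k) ∩ {ω | τ m < p i ω})).toReal = a * g := by
      rw [hDG, ENNReal.toReal_mul]
    rw [hDE', hDG']
    have ha0 : 0 ≤ a := ENNReal.toReal_nonneg
    have hknn : (0:ℝ) ≤ ((k:ℝ))⁻¹ := by positivity
    have hbF : b ≤ F i (τ k) := hPE i hi k hkm
    have hgF : 1 - F i (τ m) ≤ g := hPG i hi
    have hcig : (1:ℝ) ≤ (1 - F i (τ m))⁻¹ * g := by
      rw [← div_eq_inv_mul, le_div_iff₀ (hFm0 i)]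
      linarith
    have h1 : a * b * ((k:ℝ))⁻¹ ≤ a * F i (τ k) * ((k:ℝ))⁻¹ := by
      apply mul_le_mul_of_nonneg_right _ hknn
      exact mul_le_mul_of_nonneg_left hbF ha0
    have h2 : a * F i (τ k) * ((k:ℝ))⁻¹
        ≤ (a * F i (τ k) * ((k:ℝ))⁻¹) * ((1 - F i (τ m))⁻¹ * g) := by
      apply le_mul_of_one_le_right _ hcig
      have := hFnn i k hkm
      positivity
    calc a * b * ((k:ℝ))⁻¹ ≤ a * F i (τ k) * ((k:ℝ))⁻¹ := h1
      _ ≤ (a * F i (τ k) * ((k:ℝ))⁻¹) * ((1 - F i (τ m))⁻¹ * g) := h2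
      _ = a * g * ((1 - F i (τ m))⁻¹ * F i (τ k) * ((k:ℝ))⁻¹) := by ring
  -- pointwise bound for the sum of psiF
  have stepF : ∀ ω, ∑ i ∈ H0, FDRAux.psiF m τ p F i ω ≤ M := by
    intro ω
    set K := FDRAux.Kaug m τ (fun j => p j ω) with hKdef
    have hK1 : 1 ≤ K := FDRAux.one_le_Kaug hm
    have hKm : K ≤ m := FDRAux.Kaug_le
    have hrep : ∀ i : Fin m, FDRAux.psiF m τ p F i ω
        = if τ m < p i ω then (1 - F i (τ m))⁻¹ * F i (τ K) * ((K:ℝ))⁻¹ else 0 := by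
      intro i
      unfold FDRAux.psiF
      rw [← FDRAux.if_gt_repr (v := fun j => p j ω) hm hτ0k hτm i
        (fun k => (1 - F i (τ m))⁻¹ * F i (τ k) * ((k:ℝ))⁻¹)]
      refine Finset.sum_congr rfl (fun k _ => ?_)
      by_cases hA : numRejSU m τ (Function.update (fun j => p j ω) i 0) = k ∧ τ m < p i ω
      · have hmem : ω ∈ FDRAux.Dset m τ p i k ∩ {ω | τ m < p i ω} := ⟨hA.1, hA.2⟩
        rw [Set.indicator_of_mem hmem, if_pos hA]
      · have hnot : ω ∉ FDRAux.Dset m τ p i k ∩ {ω | τ m < p i ω} := fun hmem => hA ⟨hmem.1, hmem.2⟩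
        rw [Set.indicator_of_notMem hnot, if_neg hA]
    have htnn : ∀ i : Fin m, 0 ≤ (1 - F i (τ m))⁻¹ * F i (τ K) * ((K:ℝ))⁻¹ := by
      intro i
      have h1 := hFnn i K hKm
      have h2 := (hFm0 i).le
      positivity
    calc ∑ i ∈ H0, FDRAux.psiF m τ p F i ω
        ≤ ∑ i ∈ H0, (1 - F i (τ m))⁻¹ * F i (τ K) * ((K:ℝ))⁻¹ := by
          apply Finset.sum_le_sum
          intro i _
          rw [hrep i]
          split_ifs
          · exact le_rfl
          · exact htnn i
      _ ≤ ∑ i : Fin m, (1 - F i (τ m))⁻¹ * F i (τ K) * ((K:ℝ))⁻¹ :=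
          Finset.sum_le_sum_of_subset_of_nonneg (Finset.subset_univ _)
            (fun i _ _ => htnn i)
      _ = (1 / (K : ℝ)) * ∑ i : Fin m, F i (τ K) / (1 - F i (τ m)) := by
          rw [Finset.mul_sum]
          refine Finset.sum_congr rfl (fun i _ => ?_)
          ring
      _ ≤ M := by
          rw [hMdef]
          exact Finset.le_sup'
            (fun k : ℕ => (1 / (k : ℝ)) * ∑ i : Fin m, F i (τ k) / (1 - F i (τ m)))
            (Finset.mem_Icc.2 ⟨hK1, hKm⟩)
  -- assemble
  have hfun : (fun ω => FDP m H0 (rejSU m τ (fun j => p j ω)))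
      = fun ω => ∑ i ∈ H0, FDRAux.phiF m τ p i ω := funext stepA
  rw [hfun, integral_finset_sum _ (fun i _ => hφint i)]
  calc ∑ i ∈ H0, ∫ ω, FDRAux.phiF m τ p i ω ∂P
      ≤ ∑ i ∈ H0, ∫ ω, FDRAux.psiF m τ p F i ω ∂P := by
        apply Finset.sum_le_sum
        intro i hi
        rw [hφval i, hψval i]
        exact Finset.sum_le_sum (fun k hk => hbound i hi k hk)
    _ = ∫ ω, ∑ i ∈ H0, FDRAux.psiF m τ p F i ω ∂P :=
        (integral_finset_sum _ (fun i _ => hψint i)).symm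
    _ ≤ ∫ _, M ∂P :=
        integral_mono (integrable_finset_sum _ (fun i _ => hψint i)) (integrable_const M) stepF
    _ = M := by simp
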